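/- Let M ∈ ℕ. For each n, let a₀ⁿ, …, a_Mⁿ be real numbers and let 0 = τ₀ⁿ ≤ τ₁ⁿ ≤ … ≤ τ_{M+1}ⁿ = 1 be real numbers, and suppose a_jⁿ → a_j and τ_jⁿ → τ_j as n → ∞ for each 0 ≤ j ≤ M+1 (with 0 = τ₀ ≤ … ≤ τ_{M+1} = 1). Let f_n : [0,1] → ℝ converge uniformly on [0,1] to a continuous function f : [0,1] → ℝ. Define F_n(t) = Σ_{j=0}^M a_jⁿ ( f_n(min(t, τ_{j+1}ⁿ)) − f_n(min(t, τ_jⁿ)) ) and F(t) = Σ_{j=0}^M a_j ( f(min(t, τ_{j+1})) − f(min(t, τ_j)) ). Then sup_{t ∈ [0,1]} |F_n(t) − F(t)| → 0 as n → ∞. -/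

import Mathlib

open Set Filter

lemma aux_smul {c : ℕ → ℝ} {cL : ℝ} {g : ℕ → ℝ → ℝ} {gl : ℝ → ℝ} {s : Set ℝ} {C : ℝ}
    (hc : Tendsto c atTop (nhds cL))
    (hg : TendstoUniformlyOn g gl atTop s)
    (hb : ∀ x ∈ s, |gl x| ≤ C) :
    TendstoUniformlyOn (fun n t => c n * g n t) (fun t => cL * gl t) atTop s := by
  rw [Metric.tendstoUniformlyOn_iff] at hg ⊢
  rcases s.eq_empty_or_nonempty with rfl | ⟨x₀, hx₀⟩
  · intro ε hε; filter_upwards with n x hx; exact absurd hx (by simp)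
  intro ε hε
  have hC : 0 ≤ C := le_trans (abs_nonneg _) (hb x₀ hx₀)
  have hε1 : 0 < ε / (2 * (C + 1)) := by positivity
  have h1 := (Metric.tendsto_nhds.mp hc) (ε / (2 * (C + 1))) hε1
  have hε2 : 0 < ε / (2 * (|cL| + 1)) := by positivity
  have h2 := hg _ hε2
  have h3 := (Metric.tendsto_nhds.mp hc) 1 one_pos
  filter_upwards [h1, h2, h3] with n hn1 hn2 hn3
  intro t ht
  have e1 : |c n - cL| < ε / (2 * (C + 1)) := by simpa [Real.dist_eq] using hn1
  have e2 : |gl t - g n t| < ε / (2 * (|cL| + 1)) := by simpa [Real.dist_eq] using hn2 t ht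
  have e3 : |c n - cL| < 1 := by simpa [Real.dist_eq] using hn3
  have hcn : |c n| ≤ |cL| + 1 := by
    calc |c n| ≤ |cL| + |c n - cL| := by
          have := abs_add_le cL (c n - cL); simpa [add_sub_cancel] using this
      _ ≤ |cL| + 1 := by linarith
  rw [Real.dist_eq]
  have key : cL * gl t - c n * g n t = c n * (gl t - g n t) + (cL - c n) * gl t := by ring
  have hd := abs_nonneg (gl t - g n t)
  have hgl := abs_nonneg (gl t)
  have hglC := hb t ht
  have hcLpos : (0:ℝ) < |cL| + 1 := by positivity
  have hCpos : (0:ℝ) < C + 1 := by positivity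
  have t1 : |c n| * |gl t - g n t| < ε / 2 := by
    calc |c n| * |gl t - g n t| ≤ (|cL| + 1) * |gl t - g n t| :=
          mul_le_mul_of_nonneg_right hcn hd
      _ < (|cL| + 1) * (ε / (2 * (|cL| + 1))) := mul_lt_mul_of_pos_left e2 hcLpos
      _ = ε / 2 := by field_simp
  have t2 : |cL - c n| * |gl t| < ε / 2 := by
    rw [abs_sub_comm]
    calc |c n - cL| * |gl t| ≤ |c n - cL| * (C + 1) := by
          apply mul_le_mul_of_nonneg_left (by linarith) (abs_nonneg _)
      _ < (ε / (2 * (C + 1))) * (C + 1) := mul_lt_mul_of_pos_right e1 hCpos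
      _ = ε / 2 := by field_simp
  calc |cL * gl t - c n * g n t| ≤ |c n * (gl t - g n t)| + |(cL - c n) * gl t| := by
        rw [key]; exact abs_add_le _ _
    _ = |c n| * |gl t - g n t| + |cL - c n| * |gl t| := by rw [abs_mul, abs_mul]
    _ < ε := by linarith

lemma aux_comp {f : ℕ → ℝ → ℝ} {fL : ℝ → ℝ}
    (hf : TendstoUniformlyOn f fL atTop (Icc (0:ℝ) 1))
    (hfL : ContinuousOn fL (Icc (0:ℝ) 1))
    {σ : ℕ → ℝ} {σL : ℝ} (hσ : Tendsto σ atTop (nhds σL))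
    (hσmem : ∀ n, σ n ∈ Icc (0:ℝ) 1) (hσLmem : σL ∈ Icc (0:ℝ) 1) :
    TendstoUniformlyOn (fun n t => f n (min t (σ n))) (fun t => fL (min t σL))
      atTop (Icc (0:ℝ) 1) := by
  have huc : UniformContinuousOn fL (Icc (0:ℝ) 1) :=
    isCompact_Icc.uniformContinuousOn_of_continuous hfL
  rw [Metric.tendstoUniformlyOn_iff] at hf ⊢
  intro ε hε
  obtain ⟨δ, hδ, hδ'⟩ := (Metric.uniformContinuousOn_iff).mp huc (ε / 2) (by positivity)
  have h1 := (Metric.tendsto_nhds.mp hσ) δ hδ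
  have h2 := hf (ε / 2) (by positivity)
  filter_upwards [h1, h2] with n hn1 hn2
  intro t ht
  have hmem1 : min t (σ n) ∈ Icc (0:ℝ) 1 :=
    ⟨le_min ht.1 (hσmem n).1, min_le_of_left_le ht.2⟩
  have hmem2 : min t σL ∈ Icc (0:ℝ) 1 :=
    ⟨le_min ht.1 hσLmem.1, min_le_of_left_le ht.2⟩
  have hdist : dist (min t σL) (min t (σ n)) < δ := by
    rw [Real.dist_eq]
    calc |min t σL - min t (σ n)| ≤ max |t - t| |σL - σ n| := abs_min_sub_min_le_max _ _ _ _
      _ = |σL - σ n| := by simp [abs_nonneg]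
      _ < δ := by rw [abs_sub_comm]; simpa [Real.dist_eq] using hn1
  calc dist (fL (min t σL)) (f n (min t (σ n)))
      ≤ dist (fL (min t σL)) (fL (min t (σ n))) + dist (fL (min t (σ n))) (f n (min t (σ n))) :=
        dist_triangle _ _ _
    _ < ε / 2 + ε / 2 := add_lt_add (hδ' _ hmem2 _ hmem1 hdist) (hn2 _ hmem1)
    _ = ε := by ring

lemma aux_sum {ι : Type*} (S : Finset ι) (F : ι → ℕ → ℝ → ℝ) (G0 : ι → ℝ → ℝ) {s : Set ℝ}
    (h : ∀ i ∈ S, TendstoUniformlyOn (F i) (G0 i) atTop s) :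
    TendstoUniformlyOn (fun n t => ∑ i ∈ S, F i n t) (fun t => ∑ i ∈ S, G0 i t) atTop s := by
  classical
  induction S using Finset.induction_on with
  | empty =>
    simp only [Finset.sum_empty]
    rw [Metric.tendstoUniformlyOn_iff]
    intro ε hε
    filter_upwards with n x hx
    simpa using hε
  | insert i S' hni ih =>
    have h1 := h i (Finset.mem_insert_self i S')
    have h2 := ih (fun j hj => h j (Finset.mem_insert_of_mem hj))
    have := h1.add h2
    simp only [Finset.sum_insert hni]
    exact this

lemma chain_le (g : ℕ → ℝ) (N : ℕ) (h : ∀ j < N, g j ≤ g (j + 1)) :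
    ∀ j k, j ≤ k → k ≤ N → g j ≤ g k := by
  intro j k hjk hkN
  induction k with
  | zero =>
    have hj0 : j = 0 := by omega
    subst hj0; exact le_refl _
  | succ k ih =>
    rcases Nat.lt_or_ge j (k + 1) with h' | h'
    · exact le_trans (ih (by omega) (by omega)) (h k (by omega))
    · have hjk1 : j = k + 1 := by omega
      subst hjk1
      exact le_refl _

theorem stmt11 (M : ℕ) (a : ℕ → ℕ → ℝ) (τ : ℕ → ℕ → ℝ) (aL τL : ℕ → ℝ)
    (hτ0 : ∀ n, τ n 0 = 0) (hτlast : ∀ n, τ n (M + 1) = 1)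
    (hτmono : ∀ n, ∀ j ≤ M, τ n j ≤ τ n (j + 1))
    (hτL0 : τL 0 = 0) (hτLlast : τL (M + 1) = 1)
    (hτLmono : ∀ j ≤ M, τL j ≤ τL (j + 1))
    (ha : ∀ j ≤ M, Tendsto (fun n => a n j) atTop (nhds (aL j)))
    (hτconv : ∀ j ≤ M + 1, Tendsto (fun n => τ n j) atTop (nhds (τL j)))
    (f : ℕ → ℝ → ℝ) (fL : ℝ → ℝ)
    (hf : TendstoUniformlyOn f fL atTop (Icc (0:ℝ) 1))
    (hfL : ContinuousOn fL (Icc (0:ℝ) 1)) :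
    TendstoUniformlyOn
      (fun n t => ∑ j ∈ Finset.range (M + 1),
        a n j * (f n (min t (τ n (j + 1))) - f n (min t (τ n j))))
      (fun t => ∑ j ∈ Finset.range (M + 1),
        aL j * (fL (min t (τL (j + 1))) - fL (min t (τL j))))
      atTop (Icc (0:ℝ) 1) := by
  -- membership of the τ's in [0,1]
  have hτmem : ∀ n, ∀ j ≤ M + 1, τ n j ∈ Icc (0:ℝ) 1 := by
    intro n j hj
    have hch := chain_le (τ n) (M + 1) (fun k hk => hτmono n k (by omega))
    exact ⟨by rw [← hτ0 n]; exact hch 0 j (by omega) hj,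
           by rw [← hτlast n]; exact hch j (M + 1) hj le_rfl⟩
  have hτLmem : ∀ j ≤ M + 1, τL j ∈ Icc (0:ℝ) 1 := by
    intro j hj
    have hch := chain_le τL (M + 1) (fun k hk => hτLmono k (by omega))
    exact ⟨by rw [← hτL0]; exact hch 0 j (by omega) hj,
           by rw [← hτLlast]; exact hch j (M + 1) hj le_rfl⟩
  -- bound on fL
  obtain ⟨C, hC⟩ := isCompact_Icc.exists_bound_of_continuousOn hfL
  apply aux_sum
  intro j hj
  have hjM : j ≤ M := by simpa [Nat.lt_succ_iff] using hj
  -- the two composed uniform limits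
  have H1 := aux_comp hf hfL (hτconv (j + 1) (by omega))
    (fun n => hτmem n (j + 1) (by omega)) (hτLmem (j + 1) (by omega))
  have H2 := aux_comp hf hfL (hτconv j (by omega))
    (fun n => hτmem n j (by omega)) (hτLmem j (by omega))
  have Hsub : TendstoUniformlyOn
      (fun n t => f n (min t (τ n (j + 1))) - f n (min t (τ n j)))
      (fun t => fL (min t (τL (j + 1))) - fL (min t (τL j))) atTop (Icc (0:ℝ) 1) := by
    have := H1.sub H2
    convert this using 1 <;> rfl
  have hbound : ∀ x ∈ Icc (0:ℝ) 1,
      |fL (min x (τL (j + 1))) - fL (min x (τL j))| ≤ C + C := by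
    intro x hx
    have hm1 : min x (τL (j + 1)) ∈ Icc (0:ℝ) 1 :=
      ⟨le_min hx.1 (hτLmem (j + 1) (by omega)).1, min_le_of_left_le hx.2⟩
    have hm2 : min x (τL j) ∈ Icc (0:ℝ) 1 :=
      ⟨le_min hx.1 (hτLmem j (by omega)).1, min_le_of_left_le hx.2⟩
    calc |fL (min x (τL (j + 1))) - fL (min x (τL j))|
        ≤ |fL (min x (τL (j + 1)))| + |fL (min x (τL j))| := abs_sub _ _
      _ ≤ C + C := add_le_add (hC _ hm1) (hC _ hm2)
  exact aux_smul (ha j hjM) Hsub hbound
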